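/- Let b ∈ L^∞(ℝ^d) be non-negative and let κ_r = r^{-d} |B_1(0)|^{-1} 𝟙_{B_r(0)} be the normalized indicator of the ball of radius r. If there exist T > 0 and c > 0 such that for every (x_0, ν_0) ∈ ℝ^d × S^{d-1} the lower limit as r → 0 of the average (1/(2T)) ∫_{-T}^{T} (b ∗ κ_r)(x_0 + t ν_0) dt is at least c, then for the same T and c one has (1/(2T)) ∫_{-T}^{T} (b ∗ κ_r)(x_0 + t ν_0) dt ≥ c for every (x_0, ν_0) ∈ ℝ^d × S^{d-1} and every r > 0. -/

import Mathlib

open MeasureTheory Metric Filter Set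
open scoped ENNReal

/-- The normalized indicator of the ball of radius `r`:
`κ_r = r^{-d} |B_1(0)|⁻¹ 𝟙_{B_r(0)}`. -/
noncomputable def kappa (d : ℕ) (r : ℝ) (x : EuclideanSpace ℝ (Fin d)) : ℝ :=
  if ‖x‖ < r then ((volume (ball (0 : EuclideanSpace ℝ (Fin d)) 1)).toReal * r ^ d)⁻¹ else 0

/-- Convolution `b ∗ κ_r`. -/
noncomputable def convK {d : ℕ} (b : EuclideanSpace ℝ (Fin d) → ℝ) (r : ℝ)
    (x : EuclideanSpace ℝ (Fin d)) : ℝ :=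
  ∫ y, b y * kappa d r (x - y)

/-- The time average `(1/(2T)) ∫_{-T}^{T} (b ∗ κ_r)(x_0 + t ν_0) dt`. -/
noncomputable def avgSeg {d : ℕ} (b : EuclideanSpace ℝ (Fin d) → ℝ) (r T : ℝ)
    (x0 ν0 : EuclideanSpace ℝ (Fin d)) : ℝ :=
  (2 * T)⁻¹ * ∫ t in (-T)..T, convK b r (x0 + t • ν0)

namespace Stmt0Aux

variable {d : ℕ}

/-- The normalization constant as an extended nonneg real. -/
noncomputable def cE (d : ℕ) (r : ℝ) : ℝ≥0∞ :=
  ENNReal.ofReal (((volume (ball (0 : EuclideanSpace ℝ (Fin d)) 1)).toReal * r ^ d)⁻¹)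

/-- `kappa` as an `ℝ≥0∞`-valued kernel. -/
noncomputable def Kk (d : ℕ) (r : ℝ) (x : EuclideanSpace ℝ (Fin d)) : ℝ≥0∞ :=
  ENNReal.ofReal (kappa d r x)

/-- The convolution as a lower integral. -/
noncomputable def CC (b : EuclideanSpace ℝ (Fin d) → ℝ) (r : ℝ)
    (x : EuclideanSpace ℝ (Fin d)) : ℝ≥0∞ :=
  ∫⁻ y, ENNReal.ofReal (b y) * Kk d r (x - y)

/-- The (unnormalized) segment average as a lower integral. -/
noncomputable def GG (b : EuclideanSpace ℝ (Fin d) → ℝ) (r T : ℝ)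
    (x ν : EuclideanSpace ℝ (Fin d)) : ℝ≥0∞ :=
  ∫⁻ t in Ioc (-T) T, CC b r (x + t • ν)

lemma kappa_nonneg (r : ℝ) (x : EuclideanSpace ℝ (Fin d)) : 0 ≤ kappa d r x := by
  unfold kappa
  split_ifs with hx
  · have hr : 0 < r := lt_of_le_of_lt (norm_nonneg x) hx
    positivity
  · exact le_refl 0

lemma Kk_eq (r : ℝ) :
    Kk d r = (ball (0 : EuclideanSpace ℝ (Fin d)) r).indicator (fun _ => cE d r) := by
  funext x
  simp only [Kk, kappa, cE, indicator, mem_ball_zero_iff]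
  split_ifs <;> simp

lemma measurable_kappa (r : ℝ) : Measurable (kappa d r) := by
  unfold kappa
  have hs : MeasurableSet {x : EuclideanSpace ℝ (Fin d) | ‖x‖ < r} := by
    have he : {x : EuclideanSpace ℝ (Fin d) | ‖x‖ < r} = ball 0 r := by
      ext x; simp [mem_ball_zero_iff]
    rw [he]; exact measurableSet_ball
  exact Measurable.ite hs measurable_const measurable_const

lemma measurable_Kk (r : ℝ) : Measurable (Kk d r) := by
  rw [Kk_eq]
  exact measurable_const.indicator measurableSet_ball

lemma Kk_sub (r : ℝ) (x y : EuclideanSpace ℝ (Fin d)) :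
    Kk d r (x - y) = (ball x r).indicator (fun _ => cE d r) y := by
  rw [Kk_eq]
  by_cases hy : y ∈ ball x r
  · rw [indicator_of_mem hy, indicator_of_mem]
    rw [mem_ball, dist_eq_norm] at hy
    rw [mem_ball_zero_iff, norm_sub_rev]
    exact hy
  · rw [indicator_of_notMem hy, indicator_of_notMem]
    rw [mem_ball, dist_eq_norm] at hy
    rw [mem_ball_zero_iff, norm_sub_rev]
    exact hy

variable {b : EuclideanSpace ℝ (Fin d) → ℝ}

lemma CC_eq (hb : Measurable b) (r : ℝ) (x : EuclideanSpace ℝ (Fin d)) :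
    CC b r x = cE d r * ∫⁻ y in ball x r, ENNReal.ofReal (b y) := by
  unfold CC
  have : ∀ y, ENNReal.ofReal (b y) * Kk d r (x - y)
      = (ball x r).indicator (fun y => cE d r * ENNReal.ofReal (b y)) y := by
    intro y
    rw [Kk_sub]
    by_cases hy : y ∈ ball x r <;>
      simp [indicator_of_mem, indicator_of_notMem, hy, mul_comm]
  rw [lintegral_congr this, lintegral_indicator measurableSet_ball,
    lintegral_const_mul _ hb.ennreal_ofReal]

lemma cE_mul_ball (hd : 0 < d) {r : ℝ} (hr : 0 < r) :
    cE d r * volume (ball (0 : EuclideanSpace ℝ (Fin d)) r) = 1 := by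
  set V := volume (ball (0 : EuclideanSpace ℝ (Fin d)) 1) with hV
  have hV0 : V ≠ 0 := (measure_ball_pos _ _ one_pos).ne'
  have hVtop : V ≠ ∞ := measure_ball_lt_top.ne
  have hVt : 0 < V.toReal := ENNReal.toReal_pos hV0 hVtop
  rw [Measure.addHaar_ball_of_pos _ _ hr, finrank_euclideanSpace_fin]
  have hcE : cE d r = (V * ENNReal.ofReal (r ^ d))⁻¹ := by
    rw [cE, ENNReal.ofReal_inv_of_pos (by positivity),
      ENNReal.ofReal_mul (le_of_lt hVt), ENNReal.ofReal_toReal hVtop]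
  rw [hcE, mul_comm (ENNReal.ofReal (r ^ d)) V]
  exact ENNReal.inv_mul_cancel
    (mul_ne_zero hV0 (ENNReal.ofReal_pos.mpr (by positivity)).ne')
    (ENNReal.mul_ne_top hVtop ENNReal.ofReal_ne_top)

lemma lintegral_Kk (hd : 0 < d) {r : ℝ} (hr : 0 < r) :
    ∫⁻ y, Kk d r y = 1 := by
  rw [Kk_eq, lintegral_indicator measurableSet_ball, setLIntegral_const,
    cE_mul_ball hd hr]

lemma measurable_CC (hb : Measurable b) (r : ℝ) : Measurable (CC b r) := by
  apply Measurable.lintegral_prod_right'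
    (f := fun p : (EuclideanSpace ℝ (Fin d)) × (EuclideanSpace ℝ (Fin d)) =>
      ENNReal.ofReal (b p.2) * Kk d r (p.1 - p.2))
  exact ((hb.comp measurable_snd).ennreal_ofReal).mul
    ((measurable_Kk r).comp (measurable_fst.sub measurable_snd))

lemma measurable_CC_line (hb : Measurable b) (r : ℝ) (x ν : EuclideanSpace ℝ (Fin d)) :
    Measurable (fun t : ℝ => CC b r (x + t • ν)) :=
  (measurable_CC hb r).comp
    ((continuous_const.add (continuous_id.smul continuous_const)).measurable)

lemma measurable_GG (hb : Measurable b) (r T : ℝ) (ν : EuclideanSpace ℝ (Fin d)) :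
    Measurable (fun x => GG b r T x ν) := by
  apply Measurable.lintegral_prod_right'
    (f := fun p : (EuclideanSpace ℝ (Fin d)) × ℝ => CC b r (p.1 + p.2 • ν))
  exact (measurable_CC hb r).comp
    ((continuous_fst.add (continuous_snd.smul continuous_const)).measurable)


section Bounds

variable {d : ℕ} {b : EuclideanSpace ℝ (Fin d) → ℝ} {M : ℝ≥0∞}

lemma setLintegral_b_le (hM : ∀ᵐ y, ENNReal.ofReal (b y) ≤ M)
    (s : Set (EuclideanSpace ℝ (Fin d))) :
    ∫⁻ y in s, ENNReal.ofReal (b y) ≤ M * volume s := by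
  calc ∫⁻ y in s, ENNReal.ofReal (b y) ≤ ∫⁻ _ in s, M :=
        lintegral_mono_ae (ae_restrict_of_ae hM)
    _ = M * volume s := setLIntegral_const s M

lemma CC_le (hb : Measurable b) (hM : ∀ᵐ y, ENNReal.ofReal (b y) ≤ M)
    (hd : 0 < d) {r : ℝ} (hr : 0 < r) (x : EuclideanSpace ℝ (Fin d)) :
    CC b r x ≤ M := by
  rw [CC_eq hb]
  calc cE d r * ∫⁻ y in ball x r, ENNReal.ofReal (b y)
      ≤ cE d r * (M * volume (ball x r)) :=
        mul_le_mul_right (setLintegral_b_le hM _) _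
    _ = M * (cE d r * volume (ball x r)) := by ring
    _ = M := by rw [Measure.addHaar_ball_center volume x r, cE_mul_ball hd hr, mul_one]

lemma GG_le (hb : Measurable b) (hM : ∀ᵐ y, ENNReal.ofReal (b y) ≤ M)
    (hd : 0 < d) {r : ℝ} (hr : 0 < r) (T : ℝ)
    (x ν : EuclideanSpace ℝ (Fin d)) :
    GG b r T x ν ≤ M * ENNReal.ofReal (2 * T) := by
  unfold GG
  calc ∫⁻ t in Ioc (-T) T, CC b r (x + t • ν)
      ≤ ∫⁻ _ in Ioc (-T) T, M :=
        lintegral_mono fun t => CC_le hb hM hd hr _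
    _ = M * volume (Ioc (-T) T) := setLIntegral_const _ M
    _ = M * ENNReal.ofReal (2 * T) := by
        rw [Real.volume_Ioc, show T - -T = 2 * T by ring]

lemma convK_eq (hb : Measurable b) (hbnn : ∀ x, 0 ≤ b x) (r : ℝ)
    (x : EuclideanSpace ℝ (Fin d)) :
    convK b r x = (CC b r x).toReal := by
  unfold convK CC
  have hmeas : Measurable fun y => b y * kappa d r (x - y) :=
    hb.mul ((measurable_kappa r).comp (measurable_const.sub measurable_id))
  rw [integral_eq_lintegral_of_nonneg_ae
    (Eventually.of_forall fun y => mul_nonneg (hbnn y) (kappa_nonneg r _))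
    hmeas.aestronglyMeasurable]
  congr 1
  exact lintegral_congr fun y => by
    rw [ENNReal.ofReal_mul (hbnn y)]; rfl

lemma avgSeg_eq (hb : Measurable b) (hbnn : ∀ x, 0 ≤ b x)
    (hM : ∀ᵐ y, ENNReal.ofReal (b y) ≤ M) (hMfin : M ≠ ∞)
    (hd : 0 < d) {r : ℝ} (hr : 0 < r) {T : ℝ} (hT : 0 < T)
    (x ν : EuclideanSpace ℝ (Fin d)) :
    avgSeg b r T x ν = (2 * T)⁻¹ * (GG b r T x ν).toReal := by
  unfold avgSeg
  rw [intervalIntegral.integral_of_le (by linarith : -T ≤ T)]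
  congr 1
  have h1 : ∀ t : ℝ, convK b r (x + t • ν) = (CC b r (x + t • ν)).toReal :=
    fun t => convK_eq hb hbnn r _
  rw [integral_congr_ae (Eventually.of_forall fun t => h1 t)]
  rw [GG, ← integral_toReal ((measurable_CC_line hb r x ν).aemeasurable)
    (Eventually.of_forall fun t => lt_of_le_of_lt (CC_le hb hM hd hr _)
      (lt_top_iff_ne_top.mpr hMfin))]

end Bounds


section Symm

variable {d : ℕ} {b : EuclideanSpace ℝ (Fin d) → ℝ}

lemma J_symm (r ρ : ℝ) (u : EuclideanSpace ℝ (Fin d)) :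
    ∫⁻ z, Kk d ρ z * Kk d r (u - z) = ∫⁻ z, Kk d r z * Kk d ρ (u - z) := by
  have hmeas : Measurable fun z : EuclideanSpace ℝ (Fin d) => Kk d ρ z * Kk d r (u - z) :=
    (measurable_Kk ρ).mul ((measurable_Kk r).comp (measurable_const.sub measurable_id))
  have h := (Measure.measurePreserving_sub_left
      (volume : Measure (EuclideanSpace ℝ (Fin d))) u).lintegral_comp hmeas
  rw [← h]
  exact lintegral_congr fun z => by rw [sub_sub_cancel, mul_comm]

lemma HH_eq (hb : Measurable b) (r ρ : ℝ) (x : EuclideanSpace ℝ (Fin d)) :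
    ∫⁻ z, Kk d ρ z * CC b r (x - z)
      = ∫⁻ w, ENNReal.ofReal (b w) * ∫⁻ z, Kk d ρ z * Kk d r ((x - w) - z) := by
  have h1 : ∀ z, Kk d ρ z * CC b r (x - z)
      = ∫⁻ w, Kk d ρ z * (ENNReal.ofReal (b w) * Kk d r (x - z - w)) := by
    intro z
    have hm1 : Measurable fun w => ENNReal.ofReal (b w) * Kk d r (x - z - w) :=
      hb.ennreal_ofReal.mul ((measurable_Kk r).comp (measurable_const.sub measurable_id))
    rw [CC, ← lintegral_const_mul _ hm1]
  rw [lintegral_congr h1]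
  rw [lintegral_lintegral_swap]
  · refine lintegral_congr fun w => ?_
    have h2 : ∀ z, Kk d ρ z * (ENNReal.ofReal (b w) * Kk d r (x - z - w))
        = ENNReal.ofReal (b w) * (Kk d ρ z * Kk d r ((x - w) - z)) := by
      intro z
      rw [mul_left_comm, sub_right_comm]
    have hm2 : Measurable fun z => Kk d ρ z * Kk d r (x - w - z) :=
      (measurable_Kk ρ).mul ((measurable_Kk r).comp (measurable_const.sub measurable_id))
    rw [lintegral_congr h2, lintegral_const_mul _ hm2]
  · apply Measurable.aemeasurable
    change Measurable fun p : EuclideanSpace ℝ (Fin d) × EuclideanSpace ℝ (Fin d) =>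
      Kk d ρ p.1 * (ENNReal.ofReal (b p.2) * Kk d r (x - p.1 - p.2))
    refine Measurable.mul (f := fun p : EuclideanSpace ℝ (Fin d) × EuclideanSpace ℝ (Fin d) =>
      Kk d ρ p.1) (g := fun p => ENNReal.ofReal (b p.2) * Kk d r (x - p.1 - p.2)) ?_ ?_
    · exact (measurable_Kk ρ).comp measurable_fst
    · exact (hb.ennreal_ofReal.comp measurable_snd).mul
        ((measurable_Kk r).comp ((measurable_const.sub measurable_fst).sub measurable_snd))

lemma HH_symm (hb : Measurable b) (r ρ : ℝ) (x : EuclideanSpace ℝ (Fin d)) :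
    ∫⁻ z, Kk d ρ z * CC b r (x - z) = ∫⁻ z, Kk d r z * CC b ρ (x - z) := by
  rw [HH_eq hb r ρ x, HH_eq hb ρ r x]
  exact lintegral_congr fun w => by rw [J_symm]

lemma SS_eq (hb : Measurable b) (r ρ T : ℝ) (x ν : EuclideanSpace ℝ (Fin d)) :
    ∫⁻ z, Kk d ρ z * GG b r T (x - z) ν
      = ∫⁻ t in Ioc (-T) T, ∫⁻ z, Kk d ρ z * CC b r ((x + t • ν) - z) := by
  have h1 : ∀ z, Kk d ρ z * GG b r T (x - z) ν
      = ∫⁻ t in Ioc (-T) T, Kk d ρ z * CC b r ((x + t • ν) - z) := by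
    intro z
    rw [GG, ← lintegral_const_mul _ (measurable_CC_line hb r (x - z) ν)]
    exact lintegral_congr fun t => by rw [sub_add_eq_add_sub]
  rw [lintegral_congr h1]
  rw [lintegral_lintegral_swap]
  apply Measurable.aemeasurable
  apply Measurable.mul
  · exact (measurable_Kk ρ).comp measurable_fst
  · exact (measurable_CC hb r).comp
      (((continuous_const.add (continuous_snd.smul continuous_const)).measurable).sub
        measurable_fst)

lemma SS_symm (hb : Measurable b) (r ρ T : ℝ) (x ν : EuclideanSpace ℝ (Fin d)) :
    ∫⁻ z, Kk d ρ z * GG b r T (x - z) ν = ∫⁻ z, Kk d r z * GG b ρ T (x - z) ν := by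
  rw [SS_eq hb r ρ T x ν, SS_eq hb ρ r T x ν]
  exact lintegral_congr fun t => HH_symm hb r ρ _

end Symm


section Cont

variable {d : ℕ} {b : EuclideanSpace ℝ (Fin d) → ℝ} {M : ℝ≥0∞}

/-- Volume of the annulus between radii `r - s` and `r + s`. -/
noncomputable def Wd (d : ℕ) (r s : ℝ) : ℝ≥0∞ :=
  volume (ball (0 : EuclideanSpace ℝ (Fin d)) (r + s))
    - volume (ball (0 : EuclideanSpace ℝ (Fin d)) (r - s))

lemma Wd_mono (r : ℝ) {s s' : ℝ} (hs : s ≤ s') : Wd d r s ≤ Wd d r s' :=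
  tsub_le_tsub (measure_mono (ball_subset_ball (by linarith)))
    (measure_mono (ball_subset_ball (by linarith)))

lemma ball_sub_subset (x z : EuclideanSpace ℝ (Fin d)) (r : ℝ) :
    ball (x - z) r ⊆ ball x r ∪ (ball x (r + ‖z‖) \ ball x (r - ‖z‖)) := by
  intro w hw
  by_cases hw2 : w ∈ ball x r
  · exact Or.inl hw2
  refine Or.inr ⟨?_, fun hw3 => hw2 (ball_subset_ball (by linarith [norm_nonneg z]) hw3)⟩
  rw [mem_ball] at hw ⊢
  have h1 : dist w x ≤ dist w (x - z) + dist (x - z) x := dist_triangle _ _ _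
  have h2 : dist (x - z) x = ‖z‖ := by
    rw [dist_eq_norm]
    simp
  linarith

lemma annulus_vol (x : EuclideanSpace ℝ (Fin d)) (r s : ℝ) (hs : 0 ≤ s) :
    volume (ball x (r + s) \ ball x (r - s)) = Wd d r s := by
  rw [measure_diff (ball_subset_ball (by linarith)) measurableSet_ball.nullMeasurableSet
    measure_ball_lt_top.ne, Wd,
    Measure.addHaar_ball_center volume x, Measure.addHaar_ball_center volume x]

lemma CC_sub_le (hb : Measurable b) (hM : ∀ᵐ y, ENNReal.ofReal (b y) ≤ M)
    (r : ℝ) (x z : EuclideanSpace ℝ (Fin d)) :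
    CC b r (x - z) ≤ CC b r x + cE d r * (M * Wd d r ‖z‖) := by
  rw [CC_eq hb, CC_eq hb]
  calc cE d r * ∫⁻ y in ball (x - z) r, ENNReal.ofReal (b y)
      ≤ cE d r * ((∫⁻ y in ball x r, ENNReal.ofReal (b y))
        + ∫⁻ y in ball x (r + ‖z‖) \ ball x (r - ‖z‖), ENNReal.ofReal (b y)) := by
        refine mul_le_mul_right ?_ _
        exact le_trans (lintegral_mono_set (ball_sub_subset x z r)) (lintegral_union_le _ _ _)
    _ ≤ cE d r * (∫⁻ y in ball x r, ENNReal.ofReal (b y)) + cE d r * (M * Wd d r ‖z‖) := by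
        rw [mul_add]
        refine add_le_add_right (mul_le_mul_right ?_ _) _
        calc ∫⁻ y in ball x (r + ‖z‖) \ ball x (r - ‖z‖), ENNReal.ofReal (b y)
            ≤ M * volume (ball x (r + ‖z‖) \ ball x (r - ‖z‖)) := setLintegral_b_le hM _
          _ = M * Wd d r ‖z‖ := by rw [annulus_vol x r _ (norm_nonneg z)]

lemma GG_sub_le (hb : Measurable b) (hM : ∀ᵐ y, ENNReal.ofReal (b y) ≤ M)
    (r T : ℝ) (x z ν : EuclideanSpace ℝ (Fin d)) :
    GG b r T (x - z) ν ≤ GG b r T x ν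
      + cE d r * (M * Wd d r ‖z‖) * ENNReal.ofReal (2 * T) := by
  have h1 : GG b r T (x - z) ν = ∫⁻ t in Ioc (-T) T, CC b r ((x + t • ν) - z) := by
    rw [GG]
    exact lintegral_congr fun t => by rw [sub_add_eq_add_sub]
  rw [h1]
  calc ∫⁻ t in Ioc (-T) T, CC b r ((x + t • ν) - z)
      ≤ ∫⁻ t in Ioc (-T) T, (CC b r (x + t • ν) + cE d r * (M * Wd d r ‖z‖)) :=
        lintegral_mono fun t => CC_sub_le hb hM r _ z
    _ = GG b r T x ν + cE d r * (M * Wd d r ‖z‖) * volume (Ioc (-T) T) := by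
        rw [lintegral_add_right _ measurable_const, GG, setLIntegral_const]
    _ = GG b r T x ν + cE d r * (M * Wd d r ‖z‖) * ENNReal.ofReal (2 * T) := by
        rw [Real.volume_Ioc, show T - -T = 2 * T by ring]

lemma avg_bound (hb : Measurable b) (hM : ∀ᵐ y, ENNReal.ofReal (b y) ≤ M)
    (hd : 0 < d) {ρ : ℝ} (hρ : 0 < ρ) (r T : ℝ) (x ν : EuclideanSpace ℝ (Fin d)) :
    ∫⁻ z, Kk d ρ z * GG b r T (x - z) ν
      ≤ GG b r T x ν + cE d r * (M * Wd d r ρ) * ENNReal.ofReal (2 * T) := by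
  set Err := cE d r * (M * Wd d r ρ) * ENNReal.ofReal (2 * T) with hErr
  have hpt : ∀ z, Kk d ρ z * GG b r T (x - z) ν ≤ Kk d ρ z * (GG b r T x ν + Err) := by
    intro z
    by_cases hz : z ∈ ball (0 : EuclideanSpace ℝ (Fin d)) ρ
    · refine mul_le_mul_right ?_ _
      refine le_trans (GG_sub_le hb hM r T x z ν) ?_
      refine add_le_add_right ?_ _
      rw [hErr]
      refine mul_le_mul_left (mul_le_mul_right (mul_le_mul_right ?_ _) _) _
      exact Wd_mono r (le_of_lt (mem_ball_zero_iff.mp hz))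
    · rw [Kk_eq, indicator_of_notMem hz]
      simp
  calc ∫⁻ z, Kk d ρ z * GG b r T (x - z) ν
      ≤ ∫⁻ z, Kk d ρ z * (GG b r T x ν + Err) := lintegral_mono hpt
    _ = (∫⁻ z, Kk d ρ z) * (GG b r T x ν + Err) := lintegral_mul_const _ (measurable_Kk ρ)
    _ = GG b r T x ν + Err := by rw [lintegral_Kk hd hρ, one_mul]

end Cont


section Lim

variable {d : ℕ}

lemma Wd_le (hd : 0 < d) {r s : ℝ} (hr : 0 < r) (hs : 0 < s) (hsr : s < r) :
    Wd d r s ≤ ENNReal.ofReal ((r + s) ^ d - (r - s) ^ d)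
      * volume (ball (0 : EuclideanSpace ℝ (Fin d)) 1) := by
  set V := volume (ball (0 : EuclideanSpace ℝ (Fin d)) 1) with hV
  have h1 : volume (ball (0 : EuclideanSpace ℝ (Fin d)) (r + s))
      = ENNReal.ofReal ((r + s) ^ d) * V := by
    rw [Measure.addHaar_ball_of_pos _ _ (by linarith), finrank_euclideanSpace_fin]
  have h2 : volume (ball (0 : EuclideanSpace ℝ (Fin d)) (r - s))
      = ENNReal.ofReal ((r - s) ^ d) * V := by
    rw [Measure.addHaar_ball_of_pos _ _ (by linarith), finrank_euclideanSpace_fin]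
  rw [Wd, h1, h2]
  rw [tsub_le_iff_right]
  have h3 : ENNReal.ofReal ((r + s) ^ d)
      = ENNReal.ofReal ((r + s) ^ d - (r - s) ^ d) + ENNReal.ofReal ((r - s) ^ d) := by
    rw [← ENNReal.ofReal_add ?h1 (pow_nonneg (by linarith) d)]
    · congr 1
      ring
    case h1 =>
      have : (r - s) ^ d ≤ (r + s) ^ d :=
        pow_le_pow_left₀ (by linarith) (by linarith) d
      linarith
  rw [h3, add_mul]

lemma err_tendsto (hd : 0 < d) {M : ℝ≥0∞} (hMfin : M ≠ ∞) {r T : ℝ} (hr : 0 < r)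
    {ρ : ℕ → ℝ} (hρ : Tendsto ρ atTop (nhdsWithin 0 (Ioi 0))) :
    Tendsto (fun n => cE d r * (M * Wd d r (ρ n)) * ENNReal.ofReal (2 * T))
      atTop (nhds 0) := by
  set V := volume (ball (0 : EuclideanSpace ℝ (Fin d)) 1) with hV
  have hVtop : V ≠ ∞ := measure_ball_lt_top.ne
  -- the dominating sequence
  have hφ : Tendsto (fun n => ENNReal.ofReal ((r + ρ n) ^ d - (r - ρ n) ^ d) * V)
      atTop (nhds 0) := by
    have hρ0 : Tendsto ρ atTop (nhds 0) := hρ.mono_right nhdsWithin_le_nhds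
    have hcont : Continuous fun s : ℝ => (r + s) ^ d - (r - s) ^ d := by continuity
    have h0 : Tendsto (fun n => (r + ρ n) ^ d - (r - ρ n) ^ d) atTop (nhds 0) := by
      have := (hcont.tendsto 0).comp hρ0
      simpa [Function.comp_def] using this
    have h1 : Tendsto (fun n => ENNReal.ofReal ((r + ρ n) ^ d - (r - ρ n) ^ d))
        atTop (nhds 0) := by
      rw [← ENNReal.ofReal_zero]
      exact (ENNReal.continuous_ofReal.tendsto 0).comp h0
    have := ENNReal.Tendsto.mul_const h1 (Or.inr hVtop)
    simpa using this
  have hWd : Tendsto (fun n => Wd d r (ρ n)) atTop (nhds 0) := by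
    have hev : ∀ᶠ n in atTop, Wd d r (ρ n)
        ≤ ENNReal.ofReal ((r + ρ n) ^ d - (r - ρ n) ^ d) * V := by
      have hmem : Ioo (0 : ℝ) r ∈ nhdsWithin (0 : ℝ) (Ioi 0) :=
        Ioo_mem_nhdsGT_of_mem ⟨le_refl 0, hr⟩
      filter_upwards [hρ hmem] with n hn
      exact Wd_le hd hr hn.1 hn.2
    exact tendsto_of_tendsto_of_tendsto_of_le_of_le' tendsto_const_nhds hφ
      (Eventually.of_forall fun n => zero_le) hev
  have h2 : Tendsto (fun n => M * Wd d r (ρ n)) atTop (nhds 0) := by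
    have := ENNReal.Tendsto.const_mul hWd (Or.inr hMfin)
    simpa using this
  have h3 : Tendsto (fun n => cE d r * (M * Wd d r (ρ n))) atTop (nhds 0) := by
    have := ENNReal.Tendsto.const_mul (a := cE d r) h2 (Or.inr (by rw [cE]; exact ENNReal.ofReal_ne_top))
    simpa using this
  have h4 := ENNReal.Tendsto.mul_const h3
    (Or.inr (ENNReal.ofReal_ne_top : ENNReal.ofReal (2 * T) ≠ ⊤))
  simpa using h4

lemma avgSeg_nonneg {b : EuclideanSpace ℝ (Fin d) → ℝ} (hbnn : ∀ x, 0 ≤ b x)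
    {T : ℝ} (hT : 0 < T) (ρ : ℝ) (x ν : EuclideanSpace ℝ (Fin d)) :
    0 ≤ avgSeg b ρ T x ν := by
  unfold avgSeg
  refine mul_nonneg (by positivity) ?_
  refine intervalIntegral.integral_nonneg (by linarith) fun t _ => ?_
  exact integral_nonneg fun y => mul_nonneg (hbnn y) (kappa_nonneg ρ _)

end Lim

end Stmt0Aux

open Stmt0Aux

theorem stmt0 {d : ℕ} (b : EuclideanSpace ℝ (Fin d) → ℝ)
    (hbmeas : Measurable b) (hbd : MemLp b ⊤ volume) (hbnn : ∀ x, 0 ≤ b x)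
    (T c : ℝ) (hT : 0 < T) (hc : 0 < c)
    (h : ∀ x0 ν0 : EuclideanSpace ℝ (Fin d), ‖ν0‖ = 1 →
      c ≤ liminf (fun r => avgSeg b r T x0 ν0) (nhdsWithin 0 (Ioi 0))) :
    ∀ x0 ν0 : EuclideanSpace ℝ (Fin d), ‖ν0‖ = 1 → ∀ r : ℝ, 0 < r →
      c ≤ avgSeg b r T x0 ν0 := by
  intro x0 ν0 hν r hr
  have hd : 0 < d := by
    rcases Nat.eq_zero_or_pos d with hd0 | hd
    · subst hd0
      have hν0 : ν0 = 0 := by ext i; exact i.elim0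
      rw [hν0, norm_zero] at hν
      norm_num at hν
    · exact hd
  have h2T : (0:ℝ) < 2 * T := by linarith
  set M := eLpNormEssSup b volume with hM
  have hMfin : M ≠ ∞ := by
    have h1 := hbd.eLpNorm_lt_top
    rw [eLpNorm_exponent_top] at h1
    exact h1.ne
  have hMb : ∀ᵐ y, ENNReal.ofReal (b y) ≤ M := by
    filter_upwards [ae_le_eLpNormEssSup (f := b) (μ := volume)] with y hy
    rwa [Real.enorm_eq_ofReal (hbnn y)] at hy
  have hGle : ∀ ρ : ℝ, 0 < ρ → ∀ x, GG b ρ T x ν0 ≤ M * ENNReal.ofReal (2 * T) :=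
    fun ρ hρ x => GG_le hbmeas hMb hd hρ T x ν0
  have hGfin : ∀ ρ : ℝ, 0 < ρ → ∀ x, GG b ρ T x ν0 ≠ ∞ := fun ρ hρ x =>
    (lt_of_le_of_lt (hGle ρ hρ x)
      (ENNReal.mul_lt_top hMfin.lt_top ENNReal.ofReal_lt_top)).ne
  have havg : ∀ ρ : ℝ, 0 < ρ → ∀ x,
      avgSeg b ρ T x ν0 = (2 * T)⁻¹ * (GG b ρ T x ν0).toReal :=
    fun ρ hρ x => avgSeg_eq hbmeas hbnn hMb hMfin hd hρ hT x ν0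
  refine le_of_forall_sub_le fun ε hε => ?_
  set c' := c - ε with hc'
  rcases le_or_gt c' 0 with hc0 | hc0
  · exact le_trans hc0 (avgSeg_nonneg hbnn hT r x0 ν0)
  set ρs : ℕ → ℝ := fun n => ((n : ℝ) + 1)⁻¹ with hρs
  have hρpos : ∀ n, 0 < ρs n := fun n => by positivity
  have hρlim : Tendsto ρs atTop (nhdsWithin 0 (Ioi 0)) := by
    apply tendsto_nhdsWithin_of_tendsto_nhds_of_eventually_within
    · have h1 : Tendsto (fun n : ℕ => 1 / ((n : ℝ) + 1)) atTop (nhds 0) :=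
        tendsto_one_div_add_atTop_nhds_zero_nat
      simpa [hρs, one_div] using h1
    · exact Eventually.of_forall fun n => hρpos n
  -- eventual lower bound on the smoothed segment averages
  have hev : ∀ x, ∀ᶠ n in atTop, ENNReal.ofReal (2 * T * c') ≤ GG b (ρs n) T x ν0 := by
    intro x
    have h1 : c' < liminf (fun ρ => avgSeg b ρ T x ν0) (nhdsWithin 0 (Ioi 0)) :=
      lt_of_lt_of_le (by linarith) (h x ν0 hν)
    have hbd2 : IsBoundedUnder (· ≥ ·) (nhdsWithin (0:ℝ) (Ioi 0))
        (fun ρ => avgSeg b ρ T x ν0) :=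
      isBoundedUnder_of ⟨0, fun ρ => avgSeg_nonneg hbnn hT ρ x ν0⟩
    have h2 : ∀ᶠ ρ in nhdsWithin (0:ℝ) (Ioi 0), c' < avgSeg b ρ T x ν0 :=
      eventually_lt_of_lt_liminf h1 hbd2
    filter_upwards [hρlim.eventually h2] with n hn
    rw [havg (ρs n) (hρpos n) x] at hn
    have h5 : 2 * T * c' < (GG b (ρs n) T x ν0).toReal := by
      have h6 := mul_lt_mul_of_pos_left hn h2T
      rwa [← mul_assoc, mul_inv_cancel₀ h2T.ne', one_mul] at h6
    exact ENNReal.ofReal_le_of_le_toReal h5.le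
  have hG0fin : GG b r T x0 ν0 ≠ ∞ := hGfin r hr x0
  -- Fatou lower bound
  have hlow : ENNReal.ofReal (2 * T * c')
      ≤ liminf (fun n => ∫⁻ z, Kk d r z * GG b (ρs n) T (x0 - z) ν0) atTop := by
    have h0 : (∫⁻ z, Kk d r z * ENNReal.ofReal (2 * T * c'))
        = ENNReal.ofReal (2 * T * c') := by
      rw [lintegral_mul_const _ (measurable_Kk r), lintegral_Kk hd hr, one_mul]
    calc ENNReal.ofReal (2 * T * c')
        = ∫⁻ z, Kk d r z * ENNReal.ofReal (2 * T * c') := h0.symm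
      _ ≤ ∫⁻ z, liminf (fun n => Kk d r z * GG b (ρs n) T (x0 - z) ν0) atTop := by
          refine lintegral_mono fun z => ?_
          refine le_liminf_of_le (by isBoundedDefault) ?_
          filter_upwards [hev (x0 - z)] with n hn
          exact mul_le_mul_right hn _
      _ ≤ liminf (fun n => ∫⁻ z, Kk d r z * GG b (ρs n) T (x0 - z) ν0) atTop :=
          lintegral_liminf_le fun n => (measurable_Kk r).mul
            ((measurable_GG hbmeas (ρs n) T ν0).comp (measurable_const.sub measurable_id))
  -- upper bound via convolution switching and continuity
  have hup : ENNReal.ofReal (2 * T * c') ≤ GG b r T x0 ν0 := by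
    refine ENNReal.le_of_forall_pos_le_add fun δ hδ hfin => ?_
    have hEtend := err_tendsto (T := T) hd hMfin hr hρlim
    have hevδ : ∀ᶠ n in atTop,
        cE d r * (M * Wd d r (ρs n)) * ENNReal.ofReal (2 * T) < (δ : ℝ≥0∞) :=
      hEtend (Iio_mem_nhds (ENNReal.coe_pos.mpr hδ))
    have hfreq : ∀ᶠ n in atTop,
        (∫⁻ z, Kk d r z * GG b (ρs n) T (x0 - z) ν0) ≤ GG b r T x0 ν0 + (δ : ℝ≥0∞) := by
      filter_upwards [hevδ] with n hn
      rw [SS_symm hbmeas (ρs n) r T x0 ν0]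
      refine le_trans (avg_bound hbmeas hMb hd (hρpos n) r T x0 ν0) ?_
      exact add_le_add_right hn.le _
    exact le_trans hlow (liminf_le_of_frequently_le' hfreq.frequently)
  have hle : 2 * T * c' ≤ (GG b r T x0 ν0).toReal :=
    (ENNReal.ofReal_le_iff_le_toReal hG0fin).mp hup
  have hfinal : c' ≤ avgSeg b r T x0 ν0 := by
    rw [havg r hr x0]
    calc c' = (2 * T)⁻¹ * (2 * T * c') := by field_simp
      _ ≤ (2 * T)⁻¹ * (GG b r T x0 ν0).toReal :=
          mul_le_mul_of_nonneg_left hle (by positivity)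
  exact hfinal
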